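/- Let G be a graph and let r and s be two rays of G that are edge-equivalent (but possibly not vertex-equivalent). If V₁ ⊆ V(G) is a finite vertex set such that r and s have tails in different components of G − V₁, then there exists a vertex w ∈ V₁ that edge-dominates both r and s. -/

import Mathlib

open SimpleGraph

variable {V : Type*}

/-- A ray in `G`: a one-way infinite path. -/
structure GraphRay (G : SimpleGraph V) where
  f : ℕ → V
  inj : Function.Injective f
  adj : ∀ n, G.Adj (f n) (f (n + 1))

/-- Rays `r` and `s` are edge-equivalent: for every finite edge set `F`,
they have tails in the same connected component of `G - F`. -/
def RayEdgeEquiv (G : SimpleGraph V) (r s : GraphRay G) : Prop :=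
  ∀ F : Finset (Sym2 V), ∃ N, ∀ m ≥ N, ∀ n ≥ N,
    (G.deleteEdges ↑F).Reachable (r.f m) (s.f n)

/-- Rays `r` and `s` are vertex-equivalent: for every finite vertex set `X`,
they have tails in the same connected component of `G - X`. -/
def RayVertexEquiv (G : SimpleGraph V) (r s : GraphRay G) : Prop :=
  ∀ X : Finset V, ∃ N, ∀ m ≥ N, ∀ n ≥ N,
    ∃ (hm : r.f m ∈ ((↑X : Set V)ᶜ)) (hn : s.f n ∈ ((↑X : Set V)ᶜ)),
      (G.induce ((↑X : Set V)ᶜ)).Reachable ⟨r.f m, hm⟩ ⟨s.f n, hn⟩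

/-- Vertices `u` and `v` are edge-equivalent: for every finite edge set `F`,
they lie in the same connected component of `G - F`. -/
def VertexEdgeEquiv (G : SimpleGraph V) (u v : V) : Prop :=
  ∀ F : Finset (Sym2 V), (G.deleteEdges ↑F).Reachable u v

/-- The edge-equivalence class of a vertex `v`. -/
def edgeClass (G : SimpleGraph V) (v : V) : Set V := {u | VertexEdgeEquiv G v u}

/-- `v` edge-dominates the ray `r`: for every finite edge set `F`, `r` has a tail
in the same connected component of `G - F` as `v`. -/
def EdgeDominates (G : SimpleGraph V) (v : V) (r : GraphRay G) : Prop :=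
  ∀ F : Finset (Sym2 V), ∃ N, ∀ n ≥ N, (G.deleteEdges ↑F).Reachable v (r.f n)

/-- `v` dominates the ray `r`: there are infinitely many `v`–`r` paths,
pairwise disjoint except at `v`. -/
def Dominates (G : SimpleGraph V) (v : V) (r : GraphRay G) : Prop :=
  ∃ k : ℕ → ℕ, StrictMono k ∧
    ∃ P : ∀ n, G.Walk v (r.f (k n)),
      (∀ n, (P n).IsPath) ∧
      ∀ m n, m ≠ n → ∀ x, x ∈ (P m).support → x ∈ (P n).support → x = v

/-- A set `S` of vertices contains the ray `t`: `t` passes through infinitely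
many vertices of `S`. -/
def SetContainsRay (G : SimpleGraph V) (S : Set V) (t : GraphRay G) : Prop :=
  {n : ℕ | t.f n ∈ S}.Infinite

private lemma ray_edge_inj (G : SimpleGraph V) (r : GraphRay G) :
    Function.Injective (fun k => s(r.f k, r.f (k + 1))) := by
  intro k j h
  simp only [Sym2.eq_iff] at h
  rcases h with ⟨h1, _⟩ | ⟨h1, h2⟩
  · exact r.inj h1
  · have := r.inj h1; have := r.inj h2; omega

/-- Tails of a ray stay connected after deleting finitely many edges. -/
private lemma ray_tail (G : SimpleGraph V) (r : GraphRay G) (F : Finset (Sym2 V)) :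
    ∃ M, ∀ m ≥ M, ∀ n ≥ M, (G.deleteEdges ↑F).Reachable (r.f m) (r.f n) := by
  have hfin : {k : ℕ | s(r.f k, r.f (k + 1)) ∈ F}.Finite := by
    have := Set.Finite.preimage ((ray_edge_inj G r).injOn) F.finite_toSet
    exact this
  obtain ⟨b, hb⟩ := hfin.bddAbove
  refine ⟨b + 1, ?_⟩
  have key : ∀ m ≥ b + 1, ∀ d, (G.deleteEdges ↑F).Reachable (r.f m) (r.f (m + d)) := by
    intro m hm d
    induction d with
    | zero => exact Reachable.refl _
    | succ d ih =>
      refine ih.trans (SimpleGraph.Adj.reachable ?_)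
      rw [SimpleGraph.deleteEdges_adj]
      refine ⟨r.adj _, fun hmem => ?_⟩
      have : m + d ≤ b := hb (by simpa [Nat.add_assoc] using hmem)
      omega
  intro m hm n hn
  rcases le_total m n with h | h
  · obtain ⟨d, rfl⟩ := Nat.exists_eq_add_of_le h; exact key m hm d
  · obtain ⟨d, rfl⟩ := Nat.exists_eq_add_of_le h; exact (key n hn d).symm

/-- A walk (in a subgraph of `G`) all of whose vertices lie in `S` yields
reachability in the induced subgraph on `S`. -/
private lemma walk_to_induce (G H : SimpleGraph V) (hle : H ≤ G) (S : Set V) :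
    ∀ {a b : V} (W : H.Walk a b), (∀ x ∈ W.support, x ∈ S) →
      ∀ (ha : a ∈ S) (hb : b ∈ S), (G.induce S).Reachable ⟨a, ha⟩ ⟨b, hb⟩ := by
  intro a b W
  induction W with
  | nil => intro _ ha hb; exact Reachable.refl _
  | @cons a c b h W ih =>
    intro hsup ha hb
    have hc : c ∈ S := hsup c (by simp)
    refine Reachable.trans (SimpleGraph.Adj.reachable ?_)
      (ih (fun x hx => hsup x (by simp [hx])) hc hb)
    exact hle h

/-- If edge-equivalent rays `r` and `s` are separated by a finite vertex set `V₁`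
(their tails lie in different components of `G - V₁`), then some vertex of `V₁`
edge-dominates both `r` and `s`. -/
theorem exists_vertex_edgeDominating_both (G : SimpleGraph V) (r s : GraphRay G)
    (hE : RayEdgeEquiv G r s) (V₁ : Finset V)
    (hsep : ∃ N, (∀ n ≥ N, r.f n ∉ V₁ ∧ s.f n ∉ V₁) ∧
      ∀ m ≥ N, ∀ n ≥ N,
        ∀ (hm : r.f m ∈ ((↑V₁ : Set V)ᶜ)) (hn : s.f n ∈ ((↑V₁ : Set V)ᶜ)),
          ¬ (G.induce ((↑V₁ : Set V)ᶜ)).Reachable ⟨r.f m, hm⟩ ⟨s.f n, hn⟩) :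
    ∃ w ∈ V₁, EdgeDominates G w r ∧ EdgeDominates G w s := by
  classical
  by_contra hcon
  -- For every `w ∈ V₁`, pick a finite edge set witnessing failure of domination.
  have key : ∀ w ∈ V₁, ∃ Fw : Finset (Sym2 V),
      (∀ N, ∃ n ≥ N, ¬ (G.deleteEdges ↑Fw).Reachable w (r.f n)) ∨
      (∀ N, ∃ n ≥ N, ¬ (G.deleteEdges ↑Fw).Reachable w (s.f n)) := by
    intro w hw
    have hnd : ¬ (EdgeDominates G w r ∧ EdgeDominates G w s) :=
      fun hAB => hcon ⟨w, hw, hAB⟩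
    by_cases hA : EdgeDominates G w r
    · have hB : ¬ EdgeDominates G w s := fun hB => hnd ⟨hA, hB⟩
      unfold EdgeDominates at hB
      push_neg at hB
      obtain ⟨Fw, hFw⟩ := hB
      exact ⟨Fw, Or.inr hFw⟩
    · unfold EdgeDominates at hA
      push_neg at hA
      obtain ⟨Fw, hFw⟩ := hA
      exact ⟨Fw, Or.inl hFw⟩
  choose! Fw hFw using key
  set F : Finset (Sym2 V) := V₁.biUnion Fw with hF
  have hmono : ∀ w ∈ V₁, G.deleteEdges ↑F ≤ G.deleteEdges ↑(Fw w) := by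
    intro w hw a b hab
    rw [SimpleGraph.deleteEdges_adj] at hab ⊢
    refine ⟨hab.1, fun hm => hab.2 ?_⟩
    simp only [Finset.coe_biUnion, Set.mem_iUnion, Finset.mem_coe, hF]
    exact ⟨w, hw, by simpa using hm⟩
  obtain ⟨N₀, hN₀⟩ := hE F
  obtain ⟨Ns, hs1, hs2⟩ := hsep
  obtain ⟨Mr, hMr⟩ := ray_tail G r F
  obtain ⟨Ms, hMs⟩ := ray_tail G s F
  set n₀ := N₀ + Ns + Mr + Ms with hn₀
  obtain ⟨W⟩ := hN₀ n₀ (by omega) n₀ (by omega)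
  -- The walk must meet `V₁`.
  have hwex : ∃ x ∈ W.support, x ∈ V₁ := by
    by_contra hno
    push_neg at hno
    have hsupS : ∀ x ∈ W.support, x ∈ ((↑V₁ : Set V)ᶜ) := fun x hx => by
      simpa using hno x hx
    have har : r.f n₀ ∈ ((↑V₁ : Set V)ᶜ) := by simpa using (hs1 n₀ (by omega)).1
    have has : s.f n₀ ∈ ((↑V₁ : Set V)ᶜ) := by simpa using (hs1 n₀ (by omega)).2
    exact hs2 n₀ (by omega) n₀ (by omega) har has
      (walk_to_induce G (G.deleteEdges ↑F) (SimpleGraph.deleteEdges_le _)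
        ((↑V₁ : Set V)ᶜ) W hsupS har has)
  obtain ⟨w, hwsup, hwV⟩ := hwex
  have hRr : (G.deleteEdges ↑F).Reachable w (r.f n₀) :=
    (W.takeUntil w hwsup).reachable.symm
  have hRs : (G.deleteEdges ↑F).Reachable w (s.f n₀) :=
    (W.dropUntil w hwsup).reachable
  rcases hFw w hwV with hbad | hbad
  · obtain ⟨n, hn, hnr⟩ := hbad n₀
    exact hnr (Reachable.mono (hmono w hwV)
      (hRr.trans (hMr n₀ (by omega) n (by omega))))
  · obtain ⟨n, hn, hnr⟩ := hbad n₀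
    exact hnr (Reachable.mono (hmono w hwV)
      (hRs.trans (hMs n₀ (by omega) n (by omega))))
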